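/- Let N ≥ 1 be an integer and let R_N be the positive root of 2(1+r)r^N - (1-r)^2 = 0. For every r with R_N < r < 1 there exists a function f analytic on the open unit disk D with |f(z)| < 1 on D (one may take f(z) = (a-z)/(1-az) with a ∈ [0,1) close enough to 1) and a point z with |z| = r such that |f(z)| + ∑_{k=N}^∞ |a_k| r^k > 1, where a_k are the Taylor coefficients of f. Hence the radius R_N in the Bohr–Rogosinski inequality is best possible. -/

import Mathlib

open Metric

set_option maxHeartbeats 1000000 in
/-- Theorem 1, sharpness of the radius `R_N`: if `R` is the root in `(0,1)` of
`2(1+r)r^N = (1-r)^2`, then for every `r` with `R < r < 1` there is an analytic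
self-map of the disk violating the Bohr–Rogosinski inequality at radius `r`. -/
theorem bohr_rogosinski_radius_sharp (N : ℕ) (hN : 1 ≤ N)
    (R : ℝ) (hR : R ∈ Set.Ioo (0:ℝ) 1)
    (hroot : 2 * (1 + R) * R ^ N = (1 - R) ^ 2)
    (r : ℝ) (hrR : R < r) (hr1 : r < 1) :
    ∃ (f : ℂ → ℂ) (a : ℕ → ℂ),
      AnalyticOn ℂ f (ball (0:ℂ) 1) ∧
      (∀ z ∈ ball (0:ℂ) 1, HasSum (fun k : ℕ => a k * z ^ k) (f z)) ∧
      (∀ z ∈ ball (0:ℂ) 1, ‖f z‖ < 1) ∧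
      ∃ z : ℂ, ‖z‖ = r ∧
        1 < ‖f z‖ + ∑' k : ℕ, ‖a (N + k)‖ * r ^ (N + k) := by
  obtain ⟨hR0, hR1⟩ := hR
  have hr0 : 0 < r := hR0.trans hrR
  -- Step 1: strict inequality at r
  have hg : (1 - r)^2 < 2 * (1 + r) * r ^ N := by
    have h1 : R ^ N < r ^ N := pow_lt_pow_left₀ hrR hR0.le (by omega)
    nlinarith [pow_pos hR0 N]
  -- Step 2: choose a ∈ (1/2, 1) with φ a > 0
  have hex : ∃ a : ℝ, (0 < (1+a) * a^(N-1) * r^N * (1+a*r) - (1-r)*(1-a*r)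
      ∧ (1/2:ℝ) < a) ∧ a < 1 := by
    set φ : ℝ → ℝ := fun a => (1+a) * a^(N-1) * r^N * (1+a*r) - (1-r)*(1-a*r) with hφdef
    have hφc : Continuous φ := by fun_prop
    have hφ1 : 0 < φ 1 := by simp only [hφdef, one_pow]; nlinarith
    have h1 : ∀ᶠ a in nhds (1:ℝ), 0 < φ a ∧ (1/2:ℝ) < a :=
      ((hφc.tendsto 1).eventually (eventually_gt_nhds hφ1)).and
        (eventually_gt_nhds (by norm_num))
    have h2 : ∀ᶠ a in nhdsWithin (1:ℝ) (Set.Iio 1),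
        (0 < φ a ∧ (1/2:ℝ) < a) ∧ a < 1 :=
      (h1.filter_mono nhdsWithin_le_nhds).and self_mem_nhdsWithin
    exact h2.exists
  obtain ⟨a, ⟨hφa, ha2⟩, ha1⟩ := hex
  have ha0 : 0 < a := by linarith
  have har : a * r < 1 := by nlinarith
  have h1ar : 0 < 1 - a * r := by linarith
  have h1ar' : 0 < 1 + a * r := by nlinarith
  -- the function and its coefficients
  have hAnorm : ∀ z : ℂ, z ∈ ball (0:ℂ) 1 → ‖(a:ℂ) * z‖ < 1 := by
    intro z hz
    simp only [mem_ball, dist_zero_right] at hz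
    have : ‖(a:ℂ)‖ = a := by simp [abs_of_pos ha0]
    calc ‖(a:ℂ) * z‖ = ‖(a:ℂ)‖ * ‖z‖ := norm_mul _ _
      _ < 1 := by rw [this]; nlinarith [norm_nonneg z]
  have hden : ∀ z : ℂ, z ∈ ball (0:ℂ) 1 → 1 - (a:ℂ) * z ≠ 0 := by
    intro z hz h
    have h' : (1:ℂ) = (a:ℂ) * z := by linear_combination h
    have := hAnorm z hz
    rw [← h'] at this; simp at this
  refine ⟨fun z => ((a:ℂ) - z) / (1 - (a:ℂ) * z),
    fun k => if k = 0 then (a:ℂ) else -(1 - (a:ℂ)^2) * (a:ℂ)^(k-1), ?_, ?_, ?_, ?_⟩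
  · -- analytic
    exact ((analyticOn_const).sub analyticOn_id).div
      ((analyticOn_const).sub ((analyticOn_const).mul analyticOn_id)) hden
  · -- HasSum
    intro z hz
    have hg : HasSum (fun k : ℕ => ((a:ℂ)*z)^k) (1 - (a:ℂ)*z)⁻¹ :=
      hasSum_geometric_of_norm_lt_one (hAnorm z hz)
    have hg2 : HasSum (fun k : ℕ => (-(1-(a:ℂ)^2)*z) * ((a:ℂ)*z)^k)
        ((-(1-(a:ℂ)^2)*z) * (1 - (a:ℂ)*z)⁻¹) := hg.mul_left _
    have heq : (fun k : ℕ => (-(1-(a:ℂ)^2)*z) * ((a:ℂ)*z)^k)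
        = fun k : ℕ => (if k+1 = 0 then (a:ℂ) else -(1 - (a:ℂ)^2) * (a:ℂ)^(k+1-1)) * z^(k+1) := by
      funext k
      simp only [Nat.add_sub_cancel, if_neg (Nat.succ_ne_zero k)]
      ring
    rw [heq] at hg2
    have := (hasSum_nat_add_iff
      (f := fun k : ℕ => (if k = 0 then (a:ℂ) else -(1 - (a:ℂ)^2) * (a:ℂ)^(k-1)) * z^k) 1).mp hg2
    convert this using 1
    · rfl
    have hd := hden z hz
    simp only [Finset.range_one, Finset.sum_singleton, if_pos rfl, ↓reduceIte, pow_zero, mul_one]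
    field_simp
    ring
  · -- modulus < 1
    intro z hz
    simp only [mem_ball, dist_zero_right] at hz
    have hzn : Complex.normSq z < 1 := by
      have : ‖z‖ < 1 := hz
      nlinarith [Complex.sq_norm z, norm_nonneg z]
    have hzn' : z.re*z.re + z.im*z.im < 1 := by
      simpa [Complex.normSq_apply] using hzn
    have hkey : Complex.normSq ((a:ℂ) - z) < Complex.normSq (1 - (a:ℂ) * z) := by
      simp only [Complex.normSq_apply, Complex.sub_re, Complex.sub_im, Complex.mul_re,
        Complex.mul_im, Complex.one_re, Complex.one_im, Complex.ofReal_re,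
        Complex.ofReal_im]
      nlinarith [mul_pos (show (0:ℝ) < 1 - a^2 by nlinarith)
        (show (0:ℝ) < 1 - (z.re*z.re + z.im*z.im) by linarith)]
    have hd : (0:ℝ) < ‖1 - (a:ℂ) * z‖ := by
      exact norm_pos_iff.mpr (hden z (by simpa [mem_ball, dist_zero_right] using hz))
    rw [norm_div, div_lt_one hd, Complex.norm_def, Complex.norm_def]
    exact Real.sqrt_lt_sqrt (Complex.normSq_nonneg _) hkey
  · -- the witness point
    refine ⟨(-r : ℝ), by simp [abs_of_pos hr0], ?_⟩
    beta_reduce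
    have hfval : (((a:ℂ) - (-r:ℝ)) / (1 - (a:ℂ) * (-r:ℝ)) : ℂ) = (((a + r)/(1 + a*r) : ℝ) : ℂ) := by
      have hne : ((1 + a*r : ℝ) : ℂ) ≠ 0 := by
        exact_mod_cast (Complex.ofReal_ne_zero.mpr (ne_of_gt h1ar'))
      push_cast
      rw [div_eq_div_iff]
      · ring
      · intro h
        have : ((1 + a*r : ℝ) : ℂ) = 0 := by push_cast; linear_combination h
        exact hne this
      · exact fun h => hne (by push_cast; linear_combination h)
    have habsf : ‖((a:ℂ) - (-r:ℝ)) / (1 - (a:ℂ) * (-r:ℝ))‖ = (a + r)/(1 + a*r) := by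
      rw [hfval, Complex.norm_real, Real.norm_eq_abs, abs_of_pos (by positivity)]
    have htermeq : ∀ k : ℕ,
        ‖(fun k => if k = 0 then (a:ℂ) else -(1 - (a:ℂ)^2) * (a:ℂ)^(k-1)) (N + k)‖
          * r ^ (N + k) = ((1 - a^2) * a^(N-1) * r^N) * (a*r)^k := by
      intro k
      have hNk : N + k ≠ 0 := by omega
      have hNk1 : N + k - 1 = (N - 1) + k := by omega
      simp only [if_neg hNk, hNk1]
      have : (-(1 - (a:ℂ)^2) * (a:ℂ)^((N-1)+k)) = ((-( (1 - a^2) * a^((N-1)+k)) : ℝ) : ℂ) := by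
        push_cast; ring
      rw [this, Complex.norm_real, Real.norm_eq_abs, abs_neg,
        abs_of_nonneg (mul_nonneg (by nlinarith) (by positivity) : (0:ℝ) ≤ (1 - a^2) * a^((N-1)+k))]
      rw [pow_add, pow_add]
      ring
    have htsum : ∑' k : ℕ,
        ‖(fun k => if k = 0 then (a:ℂ) else -(1 - (a:ℂ)^2) * (a:ℂ)^(k-1)) (N + k)‖
          * r ^ (N + k) = ((1 - a^2) * a^(N-1) * r^N) * (1 - a*r)⁻¹ := by
      rw [tsum_congr htermeq, tsum_mul_left,
        tsum_geometric_of_lt_one (by positivity) har]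
    rw [habsf, htsum]
    clear habsf htsum htermeq hfval hAnorm hden hg hroot hrR hR0 hR1
    -- final numeric inequality
    have hkey : (1 + a*r)*(1 - a*r) < (a + r)*(1 - a*r) + ((1 - a^2) * a^(N-1) * r^N)*(1 + a*r) := by
      linarith [mul_pos (show (0:ℝ) < 1 - a by linarith) hφa]
    have e1 : (a + r)/(1 + a*r) + ((1 - a^2) * a^(N-1) * r^N)*(1 - a*r)⁻¹
        = ((a + r)*(1 - a*r) + ((1 - a^2) * a^(N-1) * r^N)*(1 + a*r)) / ((1 + a*r)*(1 - a*r)) := by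
      rw [← div_eq_mul_inv, div_add_div _ _ (ne_of_gt h1ar') (ne_of_gt h1ar),
        mul_comm (1 + a*r) ((1 - a^2) * a^(N-1) * r^N)]
    rw [e1, lt_div_iff₀ (by positivity), one_mul]
    exact hkey
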